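/- Let m ≥ 5 and let K be a flag simplicial complex on [m] with no ghost vertices that is pure with every facet of cardinality m−2 (equivalently, pure of dimension m−3). Then K is a cone: there exists a vertex v ∈ [m] contained in every facet of K. -/

import Mathlib

open Classical

def IsComplex {V : Type*} (K : Set (Finset V)) : Prop :=
  ∅ ∈ K ∧ ∀ σ ∈ K, ∀ τ ⊆ σ, τ ∈ K

def dual {m : ℕ} (K : Set (Finset (Fin m))) : Set (Finset (Fin m)) :=
  {σ | σᶜ ∉ K}

def inlEmb (m : ℕ) : Fin m ↪ (Fin m ⊕ Fin m) := Function.Embedding.inl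

def inrEmb (m : ℕ) : Fin m ↪ (Fin m ⊕ Fin m) := Function.Embedding.inr

/-- The Bier sphere of `K`: faces are `I ∪ J'` with `I ∈ K`, `J ∈ K∨`, `I ∩ J = ∅`,
where the first summand of `Fin m ⊕ Fin m` is `[m]` and the second is the primed copy `[m']`. -/
def bier {m : ℕ} (K : Set (Finset (Fin m))) : Set (Finset (Fin m ⊕ Fin m)) :=
  {τ | ∃ I ∈ K, ∃ J ∈ dual K, Disjoint I J ∧ τ = I.map (inlEmb m) ∪ J.map (inrEmb m)}

def IsMinNonFace {V : Type*} (K : Set (Finset V)) (σ : Finset V) : Prop :=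
  σ ∉ K ∧ ∀ τ ⊂ σ, τ ∈ K

def IsFlag {V : Type*} (K : Set (Finset V)) : Prop :=
  ∀ σ, IsMinNonFace K σ → σ.card ≤ 2

def IsFacet {V : Type*} (K : Set (Finset V)) (σ : Finset V) : Prop :=
  σ ∈ K ∧ ∀ τ ∈ K, σ ⊆ τ → σ = τ

section Aux
variable {m : ℕ} {K : Set (Finset (Fin m))}

lemma pair_mem_of_mem (hK : IsComplex K) {σ : Finset (Fin m)} (hσ : σ ∈ K)
    {x y : Fin m} (hx : x ∈ σ) (hy : y ∈ σ) : ({x, y} : Finset (Fin m)) ∈ K := by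
  refine hK.2 σ hσ _ ?_
  intro z hz
  simp only [Finset.mem_insert, Finset.mem_singleton] at hz
  rcases hz with rfl | rfl <;> assumption

lemma clique_mem (hK : IsComplex K) (hghost : ∀ i : Fin m, ({i} : Finset (Fin m)) ∈ K)
    (hflag : IsFlag K) :
    ∀ S : Finset (Fin m),
      (∀ x ∈ S, ∀ y ∈ S, x ≠ y → ({x, y} : Finset (Fin m)) ∈ K) → S ∈ K := by
  intro S
  induction S using Finset.strongInduction with
  | _ S ih =>
    intro hpairs
    by_contra hS
    have hmnf : IsMinNonFace K S :=
      ⟨hS, fun τ hτ => ih τ hτ fun x hx y hy hxy =>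
        hpairs x (hτ.1 hx) y (hτ.1 hy) hxy⟩
    have h2 := hflag S hmnf
    have h0 : S.card = 0 ∨ S.card = 1 ∨ S.card = 2 := by omega
    rcases h0 with h | h | h
    · rw [Finset.card_eq_zero] at h; subst h; exact hS hK.1
    · obtain ⟨a, rfl⟩ := Finset.card_eq_one.mp h; exact hS (hghost a)
    · obtain ⟨a, b, hab, rfl⟩ := Finset.card_eq_two.mp h
      exact hS (hpairs a (by simp) b (by simp) hab)

lemma exists_facet_superset {S : Finset (Fin m)} (hS : S ∈ K) :
    ∃ σ, IsFacet K σ ∧ S ⊆ σ := by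
  have hfin : {T : Finset (Fin m) | T ∈ K ∧ S ⊆ T}.Finite := Set.toFinite _
  obtain ⟨σ, hσ, hmax'⟩ := Set.Finite.exists_maximalFor Finset.card _ hfin ⟨S, hS, subset_rfl⟩
  have hmax : ∀ τ ∈ {T : Finset (Fin m) | T ∈ K ∧ S ⊆ T}, σ.card ≤ τ.card → σ.card = τ.card :=
    fun τ hτ h => le_antisymm h (hmax' hτ h)
  refine ⟨σ, ⟨hσ.1, fun τ hτ hsub => ?_⟩, hσ.2⟩
  exact Finset.eq_of_subset_of_card_le hsub
    (le_of_eq (hmax τ ⟨hτ, hσ.2.trans hsub⟩ (Finset.card_le_card hsub)).symm)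

lemma pair_rep {s : Finset (Fin m)} (h2 : s.card = 2) {c : Fin m} (hc : c ∈ s) :
    ∃ t, t ≠ c ∧ s = {c, t} := by
  obtain ⟨p, q, hpq, rfl⟩ := Finset.card_eq_two.mp h2
  simp only [Finset.mem_insert, Finset.mem_singleton] at hc
  rcases hc with rfl | rfl
  · exact ⟨q, hpq.symm, rfl⟩
  · exact ⟨p, hpq, Finset.pair_comm p c⟩

end Aux


theorem flag_pure_codim2_is_cone {m : ℕ} (hm : 5 ≤ m)
    (K : Set (Finset (Fin m))) (hK : IsComplex K)
    (hghost : ∀ i : Fin m, ({i} : Finset (Fin m)) ∈ K)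
    (hflag : IsFlag K)
    (hpure : ∀ σ, IsFacet K σ → σ.card = m - 2) :
    ∃ v : Fin m, ∀ σ, IsFacet K σ → v ∈ σ := by
  have hclique := clique_mem hK hghost hflag
  -- every face has card ≤ m - 2
  have hcard3 : ∀ S ∈ K, S.card ≤ m - 2 := by
    intro S hS
    obtain ⟨σ, hσ, hsub⟩ := exists_facet_superset hS
    calc S.card ≤ σ.card := Finset.card_le_card hsub
      _ = m - 2 := hpure σ hσ
  -- facet complements have card 2
  have hcompl : ∀ σ, IsFacet K σ → σᶜ.card = 2 := by
    intro σ hσ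
    have := hpure σ hσ
    have hle : σ.card ≤ m := by
      simpa using Finset.card_le_card (Finset.subset_univ σ)
    rw [Finset.card_compl, Fintype.card_fin, this]
    omega
  -- maximality gives a non-edge from any outside vertex into the facet
  have hmaxedge : ∀ σ, IsFacet K σ → ∀ u, u ∉ σ →
      ∃ x ∈ σ, u ≠ x ∧ ({u, x} : Finset (Fin m)) ∉ K := by
    intro σ hσ u hu
    by_contra h
    push_neg at h
    have hins : insert u σ ∈ K := by
      apply hclique
      intro x hx y hy hxy
      simp only [Finset.mem_insert] at hx hy
      rcases hx with rfl | hx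
      · rcases hy with rfl | hy
        · exact absurd rfl hxy
        · exact h y hy hxy
      · rcases hy with rfl | hy
        · rw [Finset.pair_comm]; exact h x hx hxy.symm
        · exact pair_mem_of_mem hK hσ.1 hx hy
    have := hσ.2 _ hins (Finset.subset_insert u σ)
    exact hu (this ▸ Finset.mem_insert_self u σ)
  by_cases hdisj : ∃ σ₁ σ₂, IsFacet K σ₁ ∧ IsFacet K σ₂ ∧ Disjoint σ₁ᶜ σ₂ᶜ
  · -- two facets with disjoint complements: pick v outside both complements
    obtain ⟨σ₁, σ₂, h1, h2, hd⟩ := hdisj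
    have hcard : (σ₁ᶜ ∪ σ₂ᶜ).card ≤ 4 := by
      have := Finset.card_union_le σ₁ᶜ σ₂ᶜ
      rw [hcompl σ₁ h1, hcompl σ₂ h2] at this
      omega
    have hv : ∃ v, v ∉ σ₁ᶜ ∪ σ₂ᶜ := by
      by_contra h
      push_neg at h
      have hsub : (Finset.univ : Finset (Fin m)) ⊆ σ₁ᶜ ∪ σ₂ᶜ := fun v _ => h v
      have := Finset.card_le_card hsub
      rw [Finset.card_univ, Fintype.card_fin] at this
      omega
    obtain ⟨v, hv⟩ := hv
    simp only [Finset.mem_union, Finset.mem_compl, not_or, not_not] at hv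
    refine ⟨v, fun σ hσ => ?_⟩
    by_contra hvσ
    obtain ⟨x, hxσ, hne, hxy⟩ := hmaxedge σ hσ v hvσ
    have hx1 : x ∉ σ₁ := fun hx => hxy (pair_mem_of_mem hK h1.1 hv.1 hx)
    have hx2 : x ∉ σ₂ := fun hx => hxy (pair_mem_of_mem hK h2.1 hv.2 hx)
    exact Finset.disjoint_left.mp hd (Finset.mem_compl.mpr hx1) (Finset.mem_compl.mpr hx2)
  · push_neg at hdisj
    by_contra hcon
    push_neg at hcon
    -- base facet
    obtain ⟨σ₀, hσ₀, -⟩ := exists_facet_superset (K := K) hK.1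
    obtain ⟨a, b, hab, hP0⟩ := Finset.card_eq_two.mp (hcompl σ₀ hσ₀)
    -- three vertices outside {a,b}
    have hTcard : (({a, b} : Finset (Fin m))ᶜ).card = m - 2 := by
      rw [Finset.card_compl, Fintype.card_fin, Finset.card_pair hab]
    have h3 : 3 ≤ (({a, b} : Finset (Fin m))ᶜ).card := by omega
    obtain ⟨T, hTsub, hT3⟩ := Finset.exists_subset_card_eq h3
    obtain ⟨c, d, e, hcd, hce, hde, rfl⟩ := Finset.card_eq_three.mp hT3
    have hc : c ∉ ({a, b} : Finset (Fin m)) :=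
      Finset.mem_compl.mp (hTsub (by simp))
    have hd' : d ∉ ({a, b} : Finset (Fin m)) :=
      Finset.mem_compl.mp (hTsub (by simp))
    have he : e ∉ ({a, b} : Finset (Fin m)) :=
      Finset.mem_compl.mp (hTsub (by simp))
    -- facets avoiding c, d, e
    obtain ⟨σc, hσc, hcσ⟩ := hcon c
    obtain ⟨σd, hσd, hdσ⟩ := hcon d
    obtain ⟨σe, hσe, heσ⟩ := hcon e
    obtain ⟨tc, htc, hPc⟩ := pair_rep (hcompl σc hσc) (Finset.mem_compl.mpr hcσ)
    obtain ⟨td, htd, hPd⟩ := pair_rep (hcompl σd hσd) (Finset.mem_compl.mpr hdσ)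
    obtain ⟨te, hte, hPe⟩ := pair_rep (hcompl σe hσe) (Finset.mem_compl.mpr heσ)
    -- each t lies in {a, b}
    have hmeet : ∀ {σ τ : Finset (Fin m)}, IsFacet K σ → IsFacet K τ →
        ∃ z, z ∈ σᶜ ∧ z ∈ τᶜ := by
      intro σ τ hσ hτ
      exact Finset.not_disjoint_iff.mp (hdisj σ τ hσ hτ)
    have htcab : tc ∈ ({a, b} : Finset (Fin m)) := by
      obtain ⟨z, hz1, hz2⟩ := hmeet hσc hσ₀
      rw [hPc] at hz1; rw [hP0] at hz2
      simp only [Finset.mem_insert, Finset.mem_singleton] at hz1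
      rcases hz1 with rfl | rfl
      · exact absurd hz2 hc
      · exact hz2
    have htdab : td ∈ ({a, b} : Finset (Fin m)) := by
      obtain ⟨z, hz1, hz2⟩ := hmeet hσd hσ₀
      rw [hPd] at hz1; rw [hP0] at hz2
      simp only [Finset.mem_insert, Finset.mem_singleton] at hz1
      rcases hz1 with rfl | rfl
      · exact absurd hz2 hd'
      · exact hz2
    have hteab : te ∈ ({a, b} : Finset (Fin m)) := by
      obtain ⟨z, hz1, hz2⟩ := hmeet hσe hσ₀
      rw [hPe] at hz1; rw [hP0] at hz2
      simp only [Finset.mem_insert, Finset.mem_singleton] at hz1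
      rcases hz1 with rfl | rfl
      · exact absurd hz2 he
      · exact hz2
    -- the t's coincide
    have htcd : tc = td := by
      obtain ⟨z, hz1, hz2⟩ := hmeet hσc hσd
      rw [hPc] at hz1; rw [hPd] at hz2
      simp only [Finset.mem_insert, Finset.mem_singleton] at hz1 hz2
      rcases hz1 with rfl | rfl
      · rcases hz2 with rfl | rfl
        · exact absurd rfl hcd
        · exact absurd htdab hc
      · rcases hz2 with rfl | rfl
        · exact absurd htcab hd'
        · rfl
    have htce : tc = te := by
      obtain ⟨z, hz1, hz2⟩ := hmeet hσc hσe
      rw [hPc] at hz1; rw [hPe] at hz2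
      simp only [Finset.mem_insert, Finset.mem_singleton] at hz1 hz2
      rcases hz1 with rfl | rfl
      · rcases hz2 with rfl | rfl
        · exact absurd rfl hce
        · exact absurd hteab hc
      · rcases hz2 with rfl | rfl
        · exact absurd htcab he
        · rfl
    set w := tc with hw
    -- univ.erase w is a face, contradiction with card bound
    have hface : (Finset.univ.erase w : Finset (Fin m)) ∈ K := by
      apply hclique
      intro x hx y hy hxy
      by_contra hnk
      have key : ∀ {σ : Finset (Fin m)} {u : Fin m}, IsFacet K σ → σᶜ = {u, w} →
          x = u ∨ y = u := by
        intro σ u hσ hPσ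
        have hxy' : ¬ (x ∈ σ ∧ y ∈ σ) := fun ⟨h1, h2⟩ =>
          hnk (pair_mem_of_mem hK hσ.1 h1 h2)
        have hxw : x ≠ w := Finset.ne_of_mem_erase hx
        have hyw : y ≠ w := Finset.ne_of_mem_erase hy
        rcases not_and_or.mp hxy' with h | h
        · have : x ∈ σᶜ := Finset.mem_compl.mpr h
          rw [hPσ] at this
          simp only [Finset.mem_insert, Finset.mem_singleton] at this
          rcases this with rfl | rfl
          · exact Or.inl rfl
          · exact absurd rfl hxw
        · have : y ∈ σᶜ := Finset.mem_compl.mpr h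
          rw [hPσ] at this
          simp only [Finset.mem_insert, Finset.mem_singleton] at this
          rcases this with rfl | rfl
          · exact Or.inr rfl
          · exact absurd rfl hyw
      have k1 := key hσc hPc
      have k2 := key hσd (by rw [hPd, ← htcd])
      have k3 := key hσe (by rw [hPe, ← htce])
      rcases k1 with h1 | h1 <;> rcases k2 with h2 | h2 <;> rcases k3 with h3 | h3 <;>
        first
          | exact hcd (h1.symm.trans h2)
          | exact hce (h1.symm.trans h3)
          | exact hde (h2.symm.trans h3)
    have hcard := hcard3 _ hface
    rw [Finset.card_erase_of_mem (Finset.mem_univ w), Finset.card_univ,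
      Fintype.card_fin] at hcard
    omega
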